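/- (Correctness of one iteration of van der Hoeven's exponential loop.) Let f ∈ ℂ⟦x⟧ have zero constant coefficient, let g = exp(f) and u = exp(−f), and let m ≥ 1 and k ≥ 1. Define ψ := the k-th block of (Σ_{i<k} g_[i] x^{im}) · (Σ_{i≤k} (δf)_[i] x^{im}), define φ := u · ψ, and let w ∈ ℂ⟦x⟧ be the series with coeff_j(w) = coeff_j(φ)/(km + j) for all j ≥ 0. Then g_[k] ≡ g_[0] · w (mod x^m). -/

import Mathlib

open PowerSeries

/-- `exp(f)`: substitution of `f` (with nilpotent, i.e. zero, constant coefficient)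
into the exponential series `Σ_{n≥0} xⁿ/n!`.  Since the constant coefficient of `f`
vanishes, the coefficient of degree `d` only receives contributions from `f^n` with
`n ≤ d`, so the following finite sum computes it. -/
noncomputable def expPS (f : PowerSeries ℂ) : PowerSeries ℂ :=
  PowerSeries.mk fun d => ∑ n ∈ Finset.range (d + 1),
    PowerSeries.coeff d (f ^ n) / (n.factorial : ℂ)

/-- The operator `δh = x · h′`, where `h′` is the formal derivative. -/
noncomputable def delta (h : PowerSeries ℂ) : PowerSeries ℂ :=
  PowerSeries.X * h.derivativeFun

/-- `a ≡ b (mod x^N)`: the coefficients of `a` and `b` agree in every degree `< N`. -/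
def modX (N : ℕ) (a b : PowerSeries ℂ) : Prop :=
  ∀ i < N, PowerSeries.coeff i a = PowerSeries.coeff i b

/-- The `k`-th block (of size `m`) of a power series: the polynomial (as a power
series) of degree `< m` whose coefficient of `x^j` is the coefficient of `x^{km+j}`. -/
noncomputable def blk (m k : ℕ) (h : PowerSeries ℂ) : PowerSeries ℂ :=
  PowerSeries.mk fun j => if j < m then PowerSeries.coeff (k * m + j) h else 0

lemma coeff_derivFun (f : PowerSeries ℂ) (n : ℕ) :
    PowerSeries.coeff n (derivativeFun f) = PowerSeries.coeff (n + 1) f * (n + 1) :=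
  PowerSeries.coeff_derivative f n

lemma coeff_pow_zero {f : PowerSeries ℂ} (hf : PowerSeries.constantCoeff f = 0)
    {n b : ℕ} (h : b < n) : PowerSeries.coeff b (f ^ n) = 0 := by
  obtain ⟨q, rfl⟩ := PowerSeries.X_dvd_iff.mpr hf
  rw [mul_pow, PowerSeries.coeff_X_pow_mul', if_neg (by omega)]

lemma derivFun_neg (f : PowerSeries ℂ) : derivativeFun (-f) = - derivativeFun f := by
  ext n
  rw [coeff_derivFun, map_neg, map_neg, coeff_derivFun, neg_mul]

lemma derivFun_pow (f : PowerSeries ℂ) (n : ℕ) :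
    derivativeFun (f ^ (n+1)) = (PowerSeries.C ((n:ℂ)+1)) * (f ^ n * derivativeFun f) := by
  induction n with
  | zero => simp
  | succ n ih =>
    rw [pow_succ, PowerSeries.derivativeFun_mul, ih, smul_eq_mul, smul_eq_mul]
    push_cast
    simp only [map_add, map_one]
    ring

lemma expPS_constCoeff (f : PowerSeries ℂ) : PowerSeries.constantCoeff (expPS f) = 1 := by
  rw [← PowerSeries.coeff_zero_eq_constantCoeff_apply, expPS, PowerSeries.coeff_mk]
  simp

lemma coeff_delta (h : PowerSeries ℂ) (n : ℕ) :
    PowerSeries.coeff n (delta h) = (n:ℂ) * PowerSeries.coeff n h := by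
  cases n with
  | zero =>
    simp [delta, PowerSeries.coeff_zero_eq_constantCoeff_apply]
  | succ n =>
    rw [delta, PowerSeries.coeff_succ_X_mul, coeff_derivFun]
    push_cast; ring

lemma expPS_deriv {f : PowerSeries ℂ} (hf : PowerSeries.constantCoeff f = 0) :
    derivativeFun (expPS f) = derivativeFun f * expPS f := by
  ext d
  rw [coeff_derivFun]
  have hR : PowerSeries.coeff d (derivativeFun f * expPS f)
      = ∑ j ∈ Finset.range (d+1),
          PowerSeries.coeff d (derivativeFun f * f ^ j) / (j.factorial : ℂ) := by
    rw [PowerSeries.coeff_mul]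
    have hext : ∀ p ∈ Finset.HasAntidiagonal.antidiagonal d,
        PowerSeries.coeff p.1 (derivativeFun f) * PowerSeries.coeff p.2 (expPS f)
        = ∑ n ∈ Finset.range (d+1), PowerSeries.coeff p.1 (derivativeFun f) *
            (PowerSeries.coeff p.2 (f ^ n) / (n.factorial : ℂ)) := by
      intro p hp
      have hple := Finset.HasAntidiagonal.mem_antidiagonal.mp hp
      rw [expPS, PowerSeries.coeff_mk, Finset.mul_sum]
      apply Finset.sum_subset
      · intro x hx
        simp only [Finset.mem_range] at hx ⊢
        omega
      · intro x hx hnx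
        simp only [Finset.mem_range] at hx hnx
        rw [coeff_pow_zero hf (by omega), zero_div, mul_zero]
    rw [Finset.sum_congr rfl hext, Finset.sum_comm]
    apply Finset.sum_congr rfl
    intro n _
    rw [PowerSeries.coeff_mul, Finset.sum_div]
    apply Finset.sum_congr rfl
    intro p _
    rw [mul_div_assoc]
  rw [hR, expPS, PowerSeries.coeff_mk, Finset.sum_mul, Finset.sum_range_succ']
  have h0 : PowerSeries.coeff (d+1) (f ^ 0) / ((Nat.factorial 0 : ℕ) : ℂ) * ((d:ℂ)+1) = 0 := by
    simp [PowerSeries.coeff_one]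
  rw [h0, add_zero]
  apply Finset.sum_congr rfl
  intro j _
  have h1 : PowerSeries.coeff (d+1) (f ^ (j+1)) * ((d:ℂ)+1)
      = ((j:ℂ)+1) * PowerSeries.coeff d (derivativeFun f * f ^ j) := by
    have := coeff_derivFun (f ^ (j+1)) d
    rw [derivFun_pow] at this
    simp only [PowerSeries.coeff_C_mul] at this
    rw [← this, mul_comm (f ^ j)]
  rw [div_mul_eq_mul_div, h1, Nat.factorial_succ, Nat.cast_mul, Nat.cast_add, Nat.cast_one]
  exact mul_div_mul_left _ _ (Nat.cast_add_one_ne_zero j)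

lemma expPS_mul_neg {f : PowerSeries ℂ} (hf : PowerSeries.constantCoeff f = 0) :
    expPS f * expPS (-f) = 1 := by
  have hf' : PowerSeries.constantCoeff (-f) = 0 := by simp [hf]
  have h1 : derivativeFun (expPS f * expPS (-f)) = 0 := by
    rw [PowerSeries.derivativeFun_mul, expPS_deriv hf, expPS_deriv hf', derivFun_neg,
      smul_eq_mul, smul_eq_mul]
    ring
  ext n
  cases n with
  | zero =>
    simp [PowerSeries.coeff_zero_eq_constantCoeff_apply, expPS_constCoeff]
  | succ n =>
    have h2 := congrArg (PowerSeries.coeff n) h1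
    rw [coeff_derivFun, map_zero] at h2
    have h3 : PowerSeries.coeff (n+1) (expPS f * expPS (-f)) = 0 := by
      have := mul_eq_zero.mp h2
      rcases this with h | h
      · exact h
      · exact absurd h (Nat.cast_add_one_ne_zero n)
    rw [h3, PowerSeries.coeff_one, if_neg (Nat.succ_ne_zero n)]

lemma coeff_blk (m k : ℕ) (h : PowerSeries ℂ) (j : ℕ) :
    PowerSeries.coeff j (blk m k h) =
      if j < m then PowerSeries.coeff (k*m+j) h else 0 := by
  rw [blk, PowerSeries.coeff_mk]

lemma coeff_blk_mul_Xpow (m i : ℕ) (h : PowerSeries ℂ) (n : ℕ) :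
    PowerSeries.coeff n (blk m i h * PowerSeries.X ^ (i*m)) =
      if i*m ≤ n ∧ n < i*m + m then PowerSeries.coeff n h else 0 := by
  rw [PowerSeries.coeff_mul_X_pow', coeff_blk]
  generalize i * m = A
  rcases le_or_gt A n with h1 | h1
  · rw [if_pos h1]
    by_cases h2 : n - A < m
    · rw [if_pos h2, if_pos (by omega), show A + (n - A) = n by omega]
    · rw [if_neg h2, if_neg (by omega)]
  · rw [if_neg (by omega), if_neg (by omega)]

lemma coeff_blocksum (m K : ℕ) (h : PowerSeries ℂ) (n : ℕ) :
    PowerSeries.coeff n (∑ i ∈ Finset.range K, blk m i h * PowerSeries.X ^ (i*m)) =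
      if n < K * m then PowerSeries.coeff n h else 0 := by
  induction K with
  | zero => simp
  | succ K ih =>
    rw [Finset.sum_range_succ, map_add, ih, coeff_blk_mul_Xpow, add_one_mul]
    generalize K * m = A
    split_ifs <;> first | (exfalso; omega) | simp

lemma shift_antidiag_sum (N j : ℕ) (F G : ℕ → ℂ) :
    ∑ p ∈ Finset.HasAntidiagonal.antidiagonal (N + j), (if N ≤ p.1 then F p.1 * G p.2 else 0)
      = ∑ q ∈ Finset.HasAntidiagonal.antidiagonal j, G q.1 * F (N + q.2) := by
  rw [← Finset.sum_filter]
  apply Finset.sum_nbij' (i := fun p => (p.2, p.1 - N)) (j := fun q => (N + q.2, q.1))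
  · intro a ha
    simp only [Finset.mem_filter, Finset.HasAntidiagonal.mem_antidiagonal] at ha ⊢
    omega
  · intro a ha
    simp only [Finset.mem_filter, Finset.HasAntidiagonal.mem_antidiagonal] at ha ⊢
    omega
  · intro a ha
    simp only [Finset.mem_filter, Finset.HasAntidiagonal.mem_antidiagonal] at ha
    ext <;> simp <;> omega
  · intro a ha
    simp only [Finset.HasAntidiagonal.mem_antidiagonal] at ha
    ext <;> simp <;> omega
  · intro a ha
    simp only [Finset.mem_filter, Finset.HasAntidiagonal.mem_antidiagonal] at ha
    rw [show N + (a.1 - N) = a.1 by omega, mul_comm]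

/-- Correctness of one iteration of van der Hoeven's exponential loop. -/
theorem vdh_loop_correct (f : PowerSeries ℂ)
    (hf : PowerSeries.constantCoeff f = 0)
    (g u : PowerSeries ℂ) (hg : g = expPS f) (hu : u = expPS (-f))
    (m k : ℕ) (hm : 1 ≤ m) (hk : 1 ≤ k)
    (ψ φ w : PowerSeries ℂ)
    (hψ : ψ = blk m k ((∑ i ∈ Finset.range k, blk m i g * PowerSeries.X ^ (i * m)) *
      (∑ i ∈ Finset.range (k + 1), blk m i (delta f) * PowerSeries.X ^ (i * m))))
    (hφ : φ = u * ψ)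
    (hw : w = PowerSeries.mk fun j =>
      PowerSeries.coeff j φ / ((k * m + j : ℕ) : ℂ)) :
    modX m (blk m k g) (blk m 0 g * w) := by
  have hkm : 1 ≤ k * m := by simpa using Nat.mul_le_mul hk hm
  have hgu : g * u = 1 := by rw [hg, hu]; exact expPS_mul_neg hf
  have hδg : delta g = g * delta f := by
    rw [hg, delta, delta, expPS_deriv hf]; ring
  have hcg : ∀ n : ℕ, PowerSeries.coeff n (g * delta f)
      = (n:ℂ) * PowerSeries.coeff n g := by
    intro n; rw [← hδg, coeff_delta]
  have hcast : ∀ b : ℕ, ((k*m+b : ℕ) : ℂ) ≠ 0 := by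
    intro b; exact Nat.cast_ne_zero.mpr (by omega)
  have hwc : ∀ b : ℕ, ((k*m+b : ℕ) : ℂ) * PowerSeries.coeff b w
      = PowerSeries.coeff b φ := by
    intro b
    rw [hw, PowerSeries.coeff_mk, mul_comm, div_mul_cancel₀ _ (hcast b)]
  have hψc : ∀ j, j < m → PowerSeries.coeff j ψ
      = ((k*m+j : ℕ) : ℂ) * PowerSeries.coeff (k*m+j) g
        - ∑ q ∈ Finset.HasAntidiagonal.antidiagonal j,
            PowerSeries.coeff q.1 (delta f) * PowerSeries.coeff (k*m+q.2) g := by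
    intro j hj
    have hq : (k+1)*m = k*m + m := add_one_mul k m
    rw [hψ, coeff_blk, if_pos hj, PowerSeries.coeff_mul]
    have step1 : ∀ p ∈ Finset.HasAntidiagonal.antidiagonal (k*m+j),
        PowerSeries.coeff p.1 (∑ i ∈ Finset.range k, blk m i g * PowerSeries.X ^ (i * m)) *
          PowerSeries.coeff p.2
            (∑ i ∈ Finset.range (k+1), blk m i (delta f) * PowerSeries.X ^ (i * m))
        = PowerSeries.coeff p.1 g * PowerSeries.coeff p.2 (delta f)
          - (if k*m ≤ p.1 then PowerSeries.coeff p.1 g * PowerSeries.coeff p.2 (delta f)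
              else 0) := by
      intro p hp
      have hmem := Finset.HasAntidiagonal.mem_antidiagonal.mp hp
      rw [coeff_blocksum, coeff_blocksum, if_pos (show p.2 < (k+1)*m by omega)]
      by_cases h1 : p.1 < k*m
      · rw [if_pos h1, if_neg (by omega), sub_zero]
      · rw [if_neg h1, if_pos (by omega), zero_mul, sub_self]
    rw [Finset.sum_congr rfl step1, Finset.sum_sub_distrib, ← PowerSeries.coeff_mul, hcg,
      shift_antidiag_sum (k*m) j (fun a => PowerSeries.coeff a g)
        (fun b => PowerSeries.coeff b (delta f))]
  suffices H : ∀ j, j < m → PowerSeries.coeff (k*m+j) g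
      = ∑ p ∈ Finset.HasAntidiagonal.antidiagonal j,
          PowerSeries.coeff p.1 g * PowerSeries.coeff p.2 w by
    intro j hj
    rw [coeff_blk, if_pos hj, PowerSeries.coeff_mul, H j hj]
    apply Finset.sum_congr rfl
    intro p hp
    have hmem := Finset.HasAntidiagonal.mem_antidiagonal.mp hp
    rw [coeff_blk, if_pos (show p.1 < m by omega), zero_mul, zero_add]
  intro j
  induction j using Nat.strong_induction_on with
  | _ j IH =>
    intro hj
    set SA := ∑ p ∈ Finset.HasAntidiagonal.antidiagonal j,
        PowerSeries.coeff p.1 g * PowerSeries.coeff p.2 w with hSA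
    have hA : ((k*m+j : ℕ):ℂ) * SA
        = PowerSeries.coeff j (g * delta f * w) + PowerSeries.coeff j ψ := by
      have e1 : ((k*m+j:ℕ):ℂ) * SA = ∑ p ∈ Finset.HasAntidiagonal.antidiagonal j,
          (PowerSeries.coeff p.1 (g * delta f) * PowerSeries.coeff p.2 w
            + PowerSeries.coeff p.1 g * PowerSeries.coeff p.2 φ) := by
        rw [hSA, Finset.mul_sum]
        apply Finset.sum_congr rfl
        intro p hp
        have hmem := Finset.HasAntidiagonal.mem_antidiagonal.mp hp
        rw [hcg p.1, ← hwc p.2]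
        have hsplit : ((k*m+j:ℕ):ℂ) = (p.1 : ℂ) + ((k*m+p.2:ℕ):ℂ) := by
          push_cast [← hmem]; ring
        rw [hsplit]; ring
      rw [e1, Finset.sum_add_distrib, ← PowerSeries.coeff_mul, ← PowerSeries.coeff_mul]
      congr 1
      rw [hφ, ← mul_assoc, hgu, one_mul]
    have hgw : PowerSeries.coeff j (g * delta f * w)
        = ∑ q ∈ Finset.HasAntidiagonal.antidiagonal j,
            PowerSeries.coeff q.1 (delta f) * PowerSeries.coeff q.2 (g * w) := by
      rw [show g * delta f * w = delta f * (g * w) by ring, PowerSeries.coeff_mul]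
    have key : ((k*m+j:ℕ):ℂ) * (PowerSeries.coeff (k*m+j) g - SA) = 0 := by
      rw [mul_sub, hA, hgw, hψc j hj]
      rw [show ∀ a X Y : ℂ, a - (Y + (a - X)) = X - Y from by intros; ring]
      rw [← Finset.sum_sub_distrib]
      apply Finset.sum_eq_zero
      intro q hq
      have hmem := Finset.HasAntidiagonal.mem_antidiagonal.mp hq
      rcases Nat.eq_zero_or_pos q.1 with h0 | h0
      · simp [h0, coeff_delta]
      · have hq2 : q.2 < j := by omega
        rw [PowerSeries.coeff_mul, ← IH q.2 hq2 (by omega)]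
        exact sub_self _
    have h := (mul_eq_zero.mp key).resolve_left (hcast j)
    exact sub_eq_zero.mp h
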